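/- arXiv:2306.05202 — 2 statements merged into one kernel-verified Lean document; each statement's English description precedes it below -/
import Mathlib

section
/- Let $g_0:[0,1]^d \to \mathbb{R}_{\ge 0}$ be coordinate-wise nonincreasing and let $g_{0,J}$ be its piecewise constant local-average approximation on the partition of $[0,1]^d$ into $J^d$ equal hypercubes. Then $\|g_{0,J} - g_0\|_1 \le d\, J^{-1}\,(g_0(\mathbf{0}) - g_0(\mathbf{1}))$. -/
open MeasureTheory Finset

noncomputable section

/-- The unit cube `[0,1]^d`. -/
def cube (d : ℕ) : Set (Fin d → ℝ) := Set.univ.pi fun _ => Set.Icc (0:ℝ) 1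

/-- The hyperrectangle `I_j` of the equal partition of `[0,1]^d` (closed at the left
endpoint when `j k = 1`). -/
def cell {d : ℕ} (J : Fin d → ℕ) (j : Fin d → ℕ) : Set (Fin d → ℝ) :=
  {x | ∀ k, (if j k = 1 then (0:ℝ) ≤ x k else ((j k : ℝ) - 1) / (J k : ℝ) < x k) ∧
      x k ≤ (j k : ℝ) / (J k : ℝ)}

/-- The index grid `[1:J]`. -/
def grid {d : ℕ} (J : Fin d → ℕ) : Finset (Fin d → ℕ) :=
  Fintype.piFinset fun k => Finset.Icc 1 (J k)

/-- The piecewise constant local-average approximation `s_J`. -/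
def pcApprox {d : ℕ} (J : Fin d → ℕ) (s : (Fin d → ℝ) → ℝ) : (Fin d → ℝ) → ℝ :=
  fun x => ∑ j ∈ grid J, Set.indicator (cell J j)
    (fun _ => (∏ k, (J k : ℝ)) * ∫ y in cell J j, s y) x

namespace Stmt5Aux

variable {d : ℕ}

/-- the cell as a product of intervals -/
lemma cell_eq_pi (J : ℕ) (j : Fin d → ℕ) :
    cell (fun _ => J) j = Set.univ.pi (fun k =>
      if j k = 1 then Set.Icc (0:ℝ) ((j k : ℝ) / J)
      else Set.Ioc (((j k : ℝ) - 1) / J) ((j k : ℝ) / J)) := by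
  ext x
  simp only [cell, Set.mem_setOf_eq, Set.mem_pi, Set.mem_univ, forall_true_left]
  refine forall_congr' fun k => ?_
  split_ifs <;> simp [Set.mem_Icc, Set.mem_Ioc]

lemma cell_measurable (J : ℕ) (j : Fin d → ℕ) :
    MeasurableSet (cell (fun _ => J) j) := by
  rw [cell_eq_pi]
  refine MeasurableSet.univ_pi fun k => ?_
  split_ifs
  · exact measurableSet_Icc
  · exact measurableSet_Ioc

lemma cell_volume (J : ℕ) (hJ : 0 < J) (j : Fin d → ℕ) (hj : j ∈ grid (fun _ => J)) :
    volume (cell (fun _ => J) j) = ENNReal.ofReal (((J:ℝ)⁻¹)^d) := by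
  have hJ0 : (0:ℝ) < J := by exact_mod_cast hJ
  rw [cell_eq_pi, volume_pi_pi]
  have h : ∀ k : Fin d, volume (if j k = 1 then Set.Icc (0:ℝ) ((j k : ℝ) / J)
      else Set.Ioc (((j k : ℝ) - 1) / J) ((j k : ℝ) / J)) = ENNReal.ofReal ((J:ℝ)⁻¹) := by
    intro k
    split_ifs with h
    · rw [Real.volume_Icc, h]
      rw [Nat.cast_one, sub_zero, one_div]
    · rw [Real.volume_Ioc]
      congr 1
      field_simp
      ring
  simp_rw [h]
  rw [Finset.prod_const, ENNReal.ofReal_pow (by positivity)]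
  simp

lemma cell_subset_cube (J : ℕ) (hJ : 0 < J) (j : Fin d → ℕ) (hj : j ∈ grid (fun _ => J)) :
    cell (fun _ => J) j ⊆ cube d := by
  intro x hx
  have hJ0 : (0:ℝ) < J := by exact_mod_cast hJ
  simp only [grid, Fintype.mem_piFinset, Finset.mem_Icc] at hj
  simp only [cube, Set.mem_pi, Set.mem_univ, forall_true_left, Set.mem_Icc]
  intro k
  obtain ⟨h1, h2⟩ := hx k
  have hk1 : (1:ℝ) ≤ (j k : ℝ) := by exact_mod_cast (hj k).1
  have hkJ : (j k : ℝ) ≤ (J:ℝ) := by exact_mod_cast (hj k).2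
  constructor
  · split_ifs at h1 with h
    · exact h1
    · exact le_trans (div_nonneg (by linarith) hJ0.le) h1.le
  · exact h2.trans ((div_le_one hJ0).mpr hkJ)

lemma cell_disjoint (J : ℕ) (hJ : 0 < J) {j j' : Fin d → ℕ}
    (hj : j ∈ grid (fun _ => J)) (hj' : j' ∈ grid (fun _ => J)) (hne : j ≠ j') :
    Disjoint (cell (fun _ => J) j) (cell (fun _ => J) j') := by
  have hJ0 : (0:ℝ) < J := by exact_mod_cast hJ
  have aux : ∀ {a b : Fin d → ℕ}, a ∈ grid (fun _ => J) → b ∈ grid (fun _ => J) →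
      ∀ k : Fin d, a k < b k → ∀ x, x ∈ cell (fun _ => J) a → x ∉ cell (fun _ => J) b := by
    intro a b ha hb k hlt x hx hx'
    simp only [grid, Fintype.mem_piFinset, Finset.mem_Icc] at ha hb
    have h2 := (hx k).2
    have h1 := (hx' k).1
    have hbk : b k ≠ 1 := by have := (ha k).1; omega
    rw [if_neg hbk] at h1
    have hcast : (a k : ℝ) ≤ (b k : ℝ) - 1 := by
      have : a k + 1 ≤ b k := hlt
      have := (Nat.cast_le (α := ℝ)).mpr this
      push_cast at this
      linarith
    have : (a k : ℝ) / J ≤ ((b k : ℝ) - 1) / J := by gcongr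
    linarith
  rw [Set.disjoint_left]
  intro x hx hx'
  obtain ⟨k, hk⟩ := Function.ne_iff.mp hne
  rcases lt_or_gt_of_ne hk with h | h
  · exact aux hj hj' k h x hx hx'
  · exact aux hj' hj k h x hx' hx

lemma cube_eq_biUnion (J : ℕ) (hJ : 0 < J) :
    cube d = ⋃ j ∈ grid (fun _ => J), cell (fun _ => J) j := by
  have hJ0 : (0:ℝ) < J := by exact_mod_cast hJ
  ext x
  simp only [Set.mem_iUnion, exists_prop]
  constructor
  · intro hx
    have hx' : ∀ k, 0 ≤ x k ∧ x k ≤ 1 := by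
      intro k
      simpa using hx k (Set.mem_univ k)
    refine ⟨fun k => max 1 ⌈x k * J⌉₊, ?_, ?_⟩
    · simp only [grid, Fintype.mem_piFinset, Finset.mem_Icc]
      intro k
      refine ⟨le_max_left _ _, max_le hJ (Nat.ceil_le.mpr ?_)⟩
      calc x k * J ≤ 1 * J := by
            have := (hx' k).2
            have hJ0' : (0:ℝ) ≤ J := hJ0.le
            nlinarith
        _ = (J:ℝ) := one_mul _
    · intro k
      simp only
      have hub : x k ≤ ((max 1 ⌈x k * (J:ℝ)⌉₊ : ℕ):ℝ) / J := by
        rw [le_div_iff₀ hJ0]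
        calc x k * J ≤ ((⌈x k * (J:ℝ)⌉₊ : ℕ):ℝ) := Nat.le_ceil _
          _ ≤ _ := by exact_mod_cast le_max_right 1 _
      refine ⟨?_, hub⟩
      split_ifs with h
      · exact (hx' k).1
      · skip
        have h2 : 2 ≤ ⌈x k * (J:ℝ)⌉₊ := by omega
        have hmax : max 1 ⌈x k * (J:ℝ)⌉₊ = ⌈x k * (J:ℝ)⌉₊ := by omega
        rw [div_lt_iff₀ hJ0, hmax]
        by_contra hcon
        push_neg at hcon
        have : ⌈x k * (J:ℝ)⌉₊ ≤ ⌈x k * (J:ℝ)⌉₊ - 1 := Nat.ceil_le.mpr (by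
          rw [Nat.cast_sub (by omega), Nat.cast_one]; linarith)
        omega
  · rintro ⟨j, hj, hx⟩
    exact cell_subset_cube J hJ j hj hx

/-- corners -/
def lcorner (J : ℕ) (j : Fin d → ℕ) : Fin d → ℝ := fun k => ((j k : ℝ) - 1) / J

def corner (J : ℕ) (j : Fin d → ℕ) : Fin d → ℝ := fun k => (j k : ℝ) / J

lemma lcorner_mem_cube (J : ℕ) (hJ : 0 < J) {j : Fin d → ℕ} (hj : j ∈ grid (fun _ => J)) :
    lcorner J j ∈ cube d := by
  have hJ0 : (0:ℝ) < J := by exact_mod_cast hJ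
  simp only [grid, Fintype.mem_piFinset, Finset.mem_Icc] at hj
  intro k _
  have hk1 : (1:ℝ) ≤ (j k : ℝ) := by exact_mod_cast (hj k).1
  have hkJ : (j k : ℝ) ≤ (J:ℝ) := by exact_mod_cast (hj k).2
  show ((j k : ℝ) - 1) / J ∈ Set.Icc (0:ℝ) 1
  rw [Set.mem_Icc, div_le_one hJ0]
  exact ⟨div_nonneg (by linarith) hJ0.le, by linarith⟩

lemma corner_mem_cube (J : ℕ) (hJ : 0 < J) {j : Fin d → ℕ} (hj : j ∈ grid (fun _ => J)) :
    corner J j ∈ cube d := by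
  have hJ0 : (0:ℝ) < J := by exact_mod_cast hJ
  simp only [grid, Fintype.mem_piFinset, Finset.mem_Icc] at hj
  intro k _
  have hk1 : (1:ℝ) ≤ (j k : ℝ) := by exact_mod_cast (hj k).1
  have hkJ : (j k : ℝ) ≤ (J:ℝ) := by exact_mod_cast (hj k).2
  show (j k : ℝ) / J ∈ Set.Icc (0:ℝ) 1
  rw [Set.mem_Icc, div_le_one hJ0]
  exact ⟨div_nonneg (by linarith) hJ0.le, by linarith⟩

lemma mem_cell_bounds (J : ℕ) (hJ : 0 < J) {j : Fin d → ℕ} (hj : j ∈ grid (fun _ => J))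
    {x : Fin d → ℝ} (hx : x ∈ cell (fun _ => J) j) :
    ∀ k, lcorner J j k ≤ x k ∧ x k ≤ corner J j k := by
  have hJ0 : (0:ℝ) < J := by exact_mod_cast hJ
  intro k
  obtain ⟨h1, h2⟩ := hx k
  refine ⟨?_, h2⟩
  split_ifs at h1 with h
  · simp only [lcorner, h, Nat.cast_one, sub_self, zero_div]
    exact h1
  · exact h1.le

lemma pcApprox_integrableOn' (J : ℕ) (hJ : 0 < J) (g0 : (Fin d → ℝ) → ℝ) :
    Integrable (pcApprox (fun _ => J) g0) volume := by
  unfold pcApprox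
  apply integrable_finset_sum
  intro j hj
  have hconst : IntegrableOn (fun _ : Fin d → ℝ =>
      (∏ k : Fin d, ((fun _ => J) k : ℝ)) * ∫ y in cell (fun _ => J) j, g0 y)
      (cell (fun _ => J) j) volume := by
    refine integrableOn_const (ne_of_lt ?_)
    rw [cell_volume J hJ j hj]
    exact ENNReal.ofReal_lt_top
  exact hconst.integrable_indicator (cell_measurable J j)

/-- per-cell bound -/
lemma cell_bound (J : ℕ) (hJ : 0 < J) (g0 : (Fin d → ℝ) → ℝ)
    (hint : IntegrableOn g0 (cube d) volume)
    (hmono : ∀ x ∈ cube d, ∀ y ∈ cube d, (∀ k, y k ≤ x k) → g0 x ≤ g0 y)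
    {j : Fin d → ℕ} (hj : j ∈ grid (fun _ => J)) :
    (∫ x in cell (fun _ => J) j, |pcApprox (fun _ => J) g0 x - g0 x|) ≤
      ((J:ℝ)⁻¹)^d * (g0 (lcorner J j) - g0 (corner J j)) := by
  have hJ0 : (0:ℝ) < J := by exact_mod_cast hJ
  set C : Set (Fin d → ℝ) := cell (fun _ => J) j with hC
  have hmeas : MeasurableSet C := cell_measurable J j
  have hvol : volume C = ENNReal.ofReal (((J:ℝ)⁻¹)^d) := cell_volume J hJ j hj
  have hvolfin : volume C < ⊤ := by rw [hvol]; exact ENNReal.ofReal_lt_top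
  have hvolR : (volume C).toReal = ((J:ℝ)⁻¹)^d := by
    rw [hvol, ENNReal.toReal_ofReal (by positivity)]
  have hsub : C ⊆ cube d := cell_subset_cube J hJ j hj
  have hintC : IntegrableOn g0 C volume := hint.mono_set hsub
  set c : ℝ := (J:ℝ)^d * ∫ y in C, g0 y with hc
  have hconst : ∀ x ∈ C, pcApprox (fun _ => J) g0 x = c := by
    intro x hx
    unfold pcApprox
    rw [Finset.sum_eq_single j]
    · rw [Set.indicator_of_mem hx]
      simp [Finset.prod_const, hc, hC]
    · intro b hb hbne
      apply Set.indicator_of_notMem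
      exact fun hxb => (Set.disjoint_left.mp (cell_disjoint J hJ hb hj hbne) hxb) hx
    · intro h; exact absurd hj h
  have hg_ub : ∀ x ∈ C, g0 x ≤ g0 (lcorner J j) := fun x hx =>
    hmono x (hsub hx) _ (lcorner_mem_cube J hJ hj)
      (fun k => (mem_cell_bounds J hJ hj hx k).1)
  have hg_lb : ∀ x ∈ C, g0 (corner J j) ≤ g0 x := fun x hx =>
    hmono _ (corner_mem_cube J hJ hj) x (hsub hx)
      (fun k => (mem_cell_bounds J hJ hj hx k).2)
  have hJd : (J:ℝ)^d * (volume C).toReal = 1 := by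
    rw [hvolR, ← mul_pow, mul_inv_cancel₀ hJ0.ne', one_pow]
  have hc_ub : c ≤ g0 (lcorner J j) := by
    have h1 : ∫ y in C, g0 y ≤ ∫ _ in C, g0 (lcorner J j) :=
      setIntegral_mono_on hintC (integrableOn_const hvolfin.ne) hmeas hg_ub
    rw [setIntegral_const, smul_eq_mul] at h1
    calc c ≤ (J:ℝ)^d * ((volume C).toReal * g0 (lcorner J j)) := by
          rw [hc]; exact mul_le_mul_of_nonneg_left h1 (by positivity)
      _ = g0 (lcorner J j) := by rw [← mul_assoc, hJd, one_mul]
  have hc_lb : g0 (corner J j) ≤ c := by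
    have h1 : ∫ _ in C, g0 (corner J j) ≤ ∫ y in C, g0 y :=
      setIntegral_mono_on (integrableOn_const hvolfin.ne) hintC hmeas hg_lb
    rw [setIntegral_const, smul_eq_mul] at h1
    calc g0 (corner J j) = (J:ℝ)^d * ((volume C).toReal * g0 (corner J j)) := by
          rw [← mul_assoc, hJd, one_mul]
      _ ≤ c := by rw [hc]; exact mul_le_mul_of_nonneg_left h1 (by positivity)
  have heq : (∫ x in C, |pcApprox (fun _ => J) g0 x - g0 x|) = ∫ x in C, |c - g0 x| := by
    apply setIntegral_congr_fun hmeas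
    intro x hx
    show |pcApprox (fun _ => J) g0 x - g0 x| = |c - g0 x|
    rw [hconst x hx]
  rw [heq]
  have hint2 : IntegrableOn (fun x => |c - g0 x|) C volume :=
    ((integrableOn_const hvolfin.ne).sub hintC).abs
  calc ∫ x in C, |c - g0 x|
      ≤ ∫ _ in C, (g0 (lcorner J j) - g0 (corner J j)) := by
        refine setIntegral_mono_on hint2 (integrableOn_const hvolfin.ne) hmeas ?_
        intro x hx
        rw [abs_le]
        constructor
        · have := hg_ub x hx; linarith
        · have := hg_lb x hx; linarith
    _ = ((J:ℝ)⁻¹)^d * (g0 (lcorner J j) - g0 (corner J j)) := by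
        rw [setIntegral_const, smul_eq_mul, measureReal_def, hvolR]

/-- mixed corner: coordinates below `m` from the upper corner, the rest lower. -/
def mid (J : ℕ) (j : Fin d → ℕ) (m : ℕ) : Fin d → ℝ :=
  fun i => if (i:ℕ) < m then (j i : ℝ)/J else ((j i : ℝ) - 1)/J

lemma mid_zero (J : ℕ) (j : Fin d → ℕ) : mid J j 0 = lcorner J j := by
  funext i; simp [mid, lcorner]

lemma mid_last (J : ℕ) (j : Fin d → ℕ) : mid J j d = corner J j := by
  funext i; simp [mid, corner, i.isLt]

/-- one-coordinate telescoping bound -/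
lemma tele_bound (J : ℕ) (hJ : 0 < J) (g0 : (Fin d → ℝ) → ℝ)
    (hmono : ∀ x ∈ cube d, ∀ y ∈ cube d, (∀ k, y k ≤ x k) → g0 x ≤ g0 y)
    (k : ℕ) (hk : k < d) :
    (∑ j ∈ grid (fun _ => J), (g0 (mid J j k) - g0 (mid J j (k+1)))) ≤
      (J:ℝ)^(d-1) * (g0 (fun _ => 0) - g0 (fun _ => 1)) := by
  have hJ0 : (0:ℝ) < J := by exact_mod_cast hJ
  obtain ⟨kf, hkv⟩ : ∃ kf : Fin d, (kf:ℕ) = k := ⟨⟨k, hk⟩, rfl⟩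
  set ψ : (Fin d → ℕ) → ℝ := fun j => g0 (mid J j (k+1)) with hψ
  -- Step A : rewrite first term via update
  have hA : ∀ j ∈ grid (fun _ => J),
      g0 (mid J j k) = ψ (Function.update j kf (j kf - 1)) := by
    intro j hj
    simp only [grid, Fintype.mem_piFinset, Finset.mem_Icc] at hj
    simp only [hψ]
    congr 1
    funext i
    simp only [mid]
    rcases eq_or_ne i kf with rfl | hne
    · simp only [Function.update_self]
      split_ifs with h1 h2 h2
      · omega
      · omega
      · rw [Nat.cast_sub (hj i).1, Nat.cast_one]
      · omega
    · rw [Function.update_of_ne hne]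
      have hik : (i:ℕ) ≠ k := fun h => hne (Fin.ext (by rw [hkv]; exact h))
      by_cases h : (i:ℕ) < k
      · rw [if_pos h, if_pos (by omega : (i:ℕ) < k+1)]
      · rw [if_neg h, if_neg (by omega : ¬ (i:ℕ) < k+1)]
  -- the shifted grid
  set grid' : Finset (Fin d → ℕ) :=
    Fintype.piFinset (fun i => if i = kf then Finset.Icc 0 (J-1) else Finset.Icc 1 J)
    with hgrid'
  have hB : ∑ j ∈ grid (fun _ => J), ψ (Function.update j kf (j kf - 1))
      = ∑ j ∈ grid', ψ j := by
    refine Finset.sum_nbij' (i := fun j => Function.update j kf (j kf - 1))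
      (j := fun j => Function.update j kf (j kf + 1)) ?_ ?_ ?_ ?_ ?_
    · intro a ha
      simp only [grid, Fintype.mem_piFinset, Finset.mem_Icc] at ha
      simp only [hgrid', Fintype.mem_piFinset]
      intro i
      rcases eq_or_ne i kf with rfl | hne
      · have hai := ha i
        simp only [Function.update_self, if_pos rfl, if_true, Finset.mem_Icc]
        omega
      · have hai := ha i
        simp only [Function.update_of_ne hne, if_neg hne, Finset.mem_Icc]
        exact hai
    · intro a ha
      simp only [hgrid', Fintype.mem_piFinset] at ha
      simp only [grid, Fintype.mem_piFinset, Finset.mem_Icc]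
      intro i
      rcases eq_or_ne i kf with rfl | hne
      · have hai := ha i
        rw [if_pos rfl, Finset.mem_Icc] at hai
        simp only [Function.update_self]
        omega
      · have hai := ha i
        rw [if_neg hne, Finset.mem_Icc] at hai
        simp only [Function.update_of_ne hne]
        exact hai
    · intro a ha
      simp only [grid, Fintype.mem_piFinset, Finset.mem_Icc] at ha
      funext i
      rcases eq_or_ne i kf with rfl | hne
      · have hai := ha i
        simp only [Function.update_self]
        omega
      · simp only [Function.update_of_ne hne]
    · intro a ha
      simp only [hgrid', Fintype.mem_piFinset] at ha
      funext i
      rcases eq_or_ne i kf with rfl | hne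
      · simp only [Function.update_self]
        omega
      · simp only [Function.update_of_ne hne]
    · intro a _; rfl
  rw [Finset.sum_sub_distrib, Finset.sum_congr rfl hA, hB]
  -- Step C : cancel the middle
  have hmidset : grid'.filter (fun j => j kf ≠ 0)
      = (grid (fun _ => J)).filter (fun j => j kf ≠ J) := by
    ext j
    simp only [hgrid', grid, Finset.mem_filter, Fintype.mem_piFinset]
    constructor
    · rintro ⟨h1, h2⟩
      have hkk := h1 kf; rw [if_pos rfl, Finset.mem_Icc] at hkk
      refine ⟨fun i => ?_, by omega⟩
      rcases eq_or_ne i kf with rfl | hne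
      · rw [Finset.mem_Icc]; omega
      · have := h1 i; rwa [if_neg hne] at this
    · rintro ⟨h1, h2⟩
      have hkk := h1 kf; rw [Finset.mem_Icc] at hkk
      refine ⟨fun i => ?_, by omega⟩
      rcases eq_or_ne i kf with rfl | hne
      · rw [if_pos rfl, Finset.mem_Icc]; omega
      · rw [if_neg hne]; exact h1 i
  have hsplit1 : ∑ j ∈ grid', ψ j
      = (∑ j ∈ grid'.filter (fun j => j kf = 0), ψ j)
        + ∑ j ∈ grid'.filter (fun j => j kf ≠ 0), ψ j :=
    (Finset.sum_filter_add_sum_filter_not _ _ _).symm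
  have hsplit2 : ∑ j ∈ grid (fun _ => J), ψ j
      = (∑ j ∈ (grid (fun _ => J)).filter (fun j => j kf = J), ψ j)
        + ∑ j ∈ (grid (fun _ => J)).filter (fun j => j kf ≠ J), ψ j :=
    (Finset.sum_filter_add_sum_filter_not _ _ _).symm
  rw [hsplit1, hsplit2, hmidset]
  -- Step D : cardinalities and pointwise bounds
  have hzero : (fun _ : Fin d => (0:ℝ)) ∈ cube d := by
    intro i _; exact ⟨le_refl _, zero_le_one⟩
  have hone : (fun _ : Fin d => (1:ℝ)) ∈ cube d := by
    intro i _; exact ⟨zero_le_one, le_refl _⟩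
  have hprodaux : ∀ c0 : ℕ, (∏ i : Fin d, if i = kf then c0 else J) = c0 * J^(d-1) := by
    intro c0
    rw [← Finset.prod_erase_mul Finset.univ _ (Finset.mem_univ kf), if_pos rfl]
    rw [Finset.prod_congr rfl (fun i hi => if_neg (Finset.ne_of_mem_erase hi))]
    rw [Finset.prod_const, Finset.card_erase_of_mem (Finset.mem_univ kf),
      Finset.card_univ, Fintype.card_fin, mul_comm]
  have hcard0 : (grid'.filter (fun j => j kf = 0)).card = J^(d-1) := by
    have hset0 : grid'.filter (fun j => j kf = 0)
        = Fintype.piFinset (fun i => if i = kf then {0} else Finset.Icc 1 J) := by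
      ext j
      simp only [hgrid', Finset.mem_filter, Fintype.mem_piFinset]
      constructor
      · rintro ⟨h1, h2⟩
        intro i
        rcases eq_or_ne i kf with rfl | hne
        · rw [if_pos rfl, Finset.mem_singleton]; exact h2
        · have := h1 i; rw [if_neg hne] at this ⊢; exact this
      · intro h
        have hk0 : j kf = 0 := by
          have := h kf; rwa [if_pos rfl, Finset.mem_singleton] at this
        refine ⟨fun i => ?_, hk0⟩
        rcases eq_or_ne i kf with rfl | hne
        · rw [if_pos rfl, Finset.mem_Icc]
          exact ⟨Nat.zero_le _, by rw [hk0]; exact Nat.zero_le _⟩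
        · have := h i; rw [if_neg hne] at this ⊢; exact this
    rw [hset0, Fintype.card_piFinset]
    have hfac : ∀ i : Fin d, (if i = kf then ({0}:Finset ℕ) else Finset.Icc 1 J).card
        = (if i = kf then 1 else J) := by
      intro i; split_ifs
      · exact Finset.card_singleton _
      · rw [Nat.card_Icc, Nat.add_sub_cancel]
    rw [Finset.prod_congr rfl (fun i _ => hfac i), hprodaux, one_mul]
  have hcardJ : ((grid (fun _ => J)).filter (fun j => j kf = J)).card = J^(d-1) := by
    have hsetJ : (grid (fun _ => J)).filter (fun j => j kf = J)
        = Fintype.piFinset (fun i => if i = kf then {J} else Finset.Icc 1 J) := by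
      ext j
      simp only [grid, Finset.mem_filter, Fintype.mem_piFinset]
      constructor
      · rintro ⟨h1, h2⟩
        intro i
        rcases eq_or_ne i kf with rfl | hne
        · rw [if_pos rfl, Finset.mem_singleton]; exact h2
        · rw [if_neg hne]; exact h1 i
      · intro h
        have hkJ2 : j kf = J := by
          have := h kf; rwa [if_pos rfl, Finset.mem_singleton] at this
        refine ⟨fun i => ?_, hkJ2⟩
        rcases eq_or_ne i kf with rfl | hne
        · rw [Finset.mem_Icc, hkJ2]; exact ⟨hJ, le_refl _⟩
        · have := h i; rwa [if_neg hne] at this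
    rw [hsetJ, Fintype.card_piFinset]
    have hfac : ∀ i : Fin d, (if i = kf then ({J}:Finset ℕ) else Finset.Icc 1 J).card
        = (if i = kf then 1 else J) := by
      intro i; split_ifs
      · exact Finset.card_singleton _
      · rw [Nat.card_Icc, Nat.add_sub_cancel]
    rw [Finset.prod_congr rfl (fun i _ => hfac i), hprodaux, one_mul]
  have hub0 : ∀ j ∈ grid'.filter (fun j => j kf = 0), ψ j ≤ g0 (fun _ => 0) := by
    intro j hjf
    rw [Finset.mem_filter] at hjf
    obtain ⟨hjg, hj0⟩ := hjf
    have hj0' : j kf = 0 := hj0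
    simp only [hgrid', Fintype.mem_piFinset] at hjg
    have hcomp : ∀ i, 0 ≤ mid J j (k+1) i ∧ mid J j (k+1) i ≤ 1 := by
      intro i
      simp only [mid]
      rcases eq_or_ne i kf with rfl | hne
      · have hlt : (i:ℕ) < k+1 := by rw [hkv]; exact Nat.lt_succ_self k
        rw [if_pos hlt]
        rw [hj0']
        norm_num
      · have hji := hjg i
        rw [if_neg hne, Finset.mem_Icc] at hji
        have h1 : (1:ℝ) ≤ (j i : ℝ) := by exact_mod_cast hji.1
        have h2 : (j i : ℝ) ≤ (J:ℝ) := by exact_mod_cast hji.2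
        split_ifs
        · exact ⟨div_nonneg (by linarith) hJ0.le, by rw [div_le_one hJ0]; linarith⟩
        · exact ⟨div_nonneg (by linarith) hJ0.le, by rw [div_le_one hJ0]; linarith⟩
    have hmem : mid J j (k+1) ∈ cube d := fun i _ => ⟨(hcomp i).1, (hcomp i).2⟩
    exact hmono _ hmem _ hzero (fun i => (hcomp i).1)
  have hlbJ : ∀ j ∈ (grid (fun _ => J)).filter (fun j => j kf = J),
      g0 (fun _ => 1) ≤ ψ j := by
    intro j hjf
    rw [Finset.mem_filter] at hjf
    obtain ⟨hjg, hjJ⟩ := hjf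
    simp only [grid, Fintype.mem_piFinset, Finset.mem_Icc] at hjg
    have hcomp : ∀ i, 0 ≤ mid J j (k+1) i ∧ mid J j (k+1) i ≤ 1 := by
      intro i
      simp only [mid]
      have hji := hjg i
      have h1 : (1:ℝ) ≤ (j i : ℝ) := by exact_mod_cast hji.1
      have h2 : (j i : ℝ) ≤ (J:ℝ) := by exact_mod_cast hji.2
      split_ifs
      · exact ⟨div_nonneg (by linarith) hJ0.le, by rw [div_le_one hJ0]; linarith⟩
      · exact ⟨div_nonneg (by linarith) hJ0.le, by rw [div_le_one hJ0]; linarith⟩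
    have hmem : mid J j (k+1) ∈ cube d := fun i _ => ⟨(hcomp i).1, (hcomp i).2⟩
    exact hmono _ hone _ hmem (fun i => (hcomp i).2)
  have h0 : ∑ j ∈ grid'.filter (fun j => j kf = 0), ψ j
      ≤ (J:ℝ)^(d-1) * g0 (fun _ => 0) := by
    have h := Finset.sum_le_card_nsmul _ _ _ hub0
    rw [hcard0] at h
    calc ∑ j ∈ grid'.filter (fun j => j kf = 0), ψ j
        ≤ (J^(d-1) : ℕ) • g0 (fun _ => 0) := h
      _ = (J:ℝ)^(d-1) * g0 (fun _ => 0) := by rw [nsmul_eq_mul]; push_cast; ring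
  have hJ1 : (J:ℝ)^(d-1) * g0 (fun _ => 1)
      ≤ ∑ j ∈ (grid (fun _ => J)).filter (fun j => j kf = J), ψ j := by
    have h := Finset.card_nsmul_le_sum _ _ _ hlbJ
    rw [hcardJ] at h
    calc (J:ℝ)^(d-1) * g0 (fun _ => 1)
        = (J^(d-1) : ℕ) • g0 (fun _ => 1) := by rw [nsmul_eq_mul]; push_cast; ring
      _ ≤ _ := h
  linarith

/-- combinatorial telescoping bound -/
lemma sum_delta (J : ℕ) (hJ : 0 < J) (g0 : (Fin d → ℝ) → ℝ)
    (hmono : ∀ x ∈ cube d, ∀ y ∈ cube d, (∀ k, y k ≤ x k) → g0 x ≤ g0 y) :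
    ∑ j ∈ grid (fun _ => J), (g0 (lcorner J j) - g0 (corner J j)) ≤
      (d : ℝ) * (J:ℝ)^(d-1) * (g0 (fun _ => 0) - g0 (fun _ => 1)) := by
  have htel : ∀ j ∈ grid (fun _ => J), g0 (lcorner J j) - g0 (corner J j)
      = ∑ k ∈ Finset.range d, (g0 (mid J j k) - g0 (mid J j (k+1))) := by
    intro j _
    rw [Finset.sum_range_sub' (f := fun m => g0 (mid J j m)), mid_zero, mid_last]
  rw [Finset.sum_congr rfl htel, Finset.sum_comm]
  calc ∑ k ∈ Finset.range d, ∑ j ∈ grid (fun _ => J),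
        (g0 (mid J j k) - g0 (mid J j (k+1)))
      ≤ ∑ k ∈ Finset.range d, (J:ℝ)^(d-1) * (g0 (fun _ => 0) - g0 (fun _ => 1)) :=
        Finset.sum_le_sum fun k hk =>
          tele_bound J hJ g0 hmono k (Finset.mem_range.mp hk)
    _ = (d : ℝ) * (J:ℝ)^(d-1) * (g0 (fun _ => 0) - g0 (fun _ => 1)) := by
        rw [Finset.sum_const, Finset.card_range, nsmul_eq_mul]; ring

lemma pcApprox_integrableOn (J : ℕ) (hJ : 0 < J) (g0 : (Fin d → ℝ) → ℝ) :
    IntegrableOn (pcApprox (fun _ => J) g0) (cube d) volume :=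
  (pcApprox_integrableOn' J hJ g0).integrableOn

end Stmt5Aux

open Stmt5Aux in
/-- L1 approximation rate of the local-average approximation of a
coordinate-wise nonincreasing nonnegative function. -/
theorem stmt5 {d : ℕ} (J : ℕ) (hJ : 0 < J) (g0 : (Fin d → ℝ) → ℝ)
    (hint : IntegrableOn g0 (cube d) volume)
    (hnn : ∀ x, 0 ≤ g0 x)
    (hmono : ∀ x ∈ cube d, ∀ y ∈ cube d, (∀ k, y k ≤ x k) → g0 x ≤ g0 y) :
    (∫ x in cube d, |pcApprox (fun _ => J) g0 x - g0 x|) ≤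
      d * (J : ℝ)⁻¹ * (g0 (fun _ => 0) - g0 (fun _ => 1)) := by
  have habs : IntegrableOn (fun x => |pcApprox (fun _ => J) g0 x - g0 x|) (cube d) volume :=
    ((pcApprox_integrableOn J hJ g0).sub hint).abs
  have hsplit : (∫ x in cube d, |pcApprox (fun _ => J) g0 x - g0 x|) =
      ∑ j ∈ grid (fun _ => J), ∫ x in cell (fun _ => J) j,
        |pcApprox (fun _ => J) g0 x - g0 x| := by
    rw [cube_eq_biUnion J hJ] at habs ⊢
    exact integral_biUnion_finset _ (fun j _ => cell_measurable J j)
      (fun j hj j' hj' hne => cell_disjoint J hJ hj hj' hne)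
      (fun j hj => habs.mono_set (Set.subset_biUnion_of_mem hj))
  rw [hsplit]
  calc ∑ j ∈ grid (fun _ => J), ∫ x in cell (fun _ => J) j,
        |pcApprox (fun _ => J) g0 x - g0 x|
      ≤ ∑ j ∈ grid (fun _ => J), ((J:ℝ)⁻¹)^d * (g0 (lcorner J j) - g0 (corner J j)) :=
        Finset.sum_le_sum fun j hj => cell_bound J hJ g0 hint hmono hj
    _ = ((J:ℝ)⁻¹)^d * ∑ j ∈ grid (fun _ => J), (g0 (lcorner J j) - g0 (corner J j)) := by
        rw [Finset.mul_sum]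
    _ ≤ ((J:ℝ)⁻¹)^d * ((d : ℝ) * (J:ℝ)^(d-1) * (g0 (fun _ => 0) - g0 (fun _ => 1))) :=
        mul_le_mul_of_nonneg_left (sum_delta J hJ g0 hmono) (by positivity)
    _ = d * (J : ℝ)⁻¹ * (g0 (fun _ => 0) - g0 (fun _ => 1)) := by
        rcases Nat.eq_zero_or_pos d with hd | hd
        · subst hd; simp
        · have hJ0 : (J:ℝ) ≠ 0 := Nat.cast_ne_zero.mpr hJ.ne'
          have key : ((J:ℝ)⁻¹)^d * (J:ℝ)^(d-1) = (J:ℝ)⁻¹ := by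
            obtain ⟨m, rfl⟩ : ∃ m, d = m + 1 := ⟨d - 1, (Nat.succ_pred_eq_of_pos hd).symm⟩
            simp only [Nat.add_sub_cancel]
            rw [pow_succ]
            field_simp
            rw [div_pow, one_pow, div_mul_cancel₀ _ (pow_ne_zero _ hJ0)]
          calc ((J:ℝ)⁻¹)^d * ((d : ℝ) * (J:ℝ)^(d-1) * (g0 (fun _ => 0) - g0 (fun _ => 1)))
              = (((J:ℝ)⁻¹)^d * (J:ℝ)^(d-1)) * ((d:ℝ) * (g0 (fun _ => 0) - g0 (fun _ => 1))) := by
                ring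
            _ = d * (J : ℝ)⁻¹ * (g0 (fun _ => 0) - g0 (fun _ => 1)) := by rw [key]; ring
end
end

section
/- Let $\theta_{\mathbf{j}}$, $\mathbf{j} \in [\mathbf{1}:\mathbf{J}]$, be a nonnegative array on the $d$-dimensional index grid and $\mathbf{j}_0$ a fixed index. Define the min-max value $\theta^{\star}_{\mathbf{j}_0} = \min_{\mathbf{j}_1 \preceq \mathbf{j}_0} \max_{\mathbf{j}_0 \preceq \mathbf{j}_2} \big(\sum_{\mathbf{j} \in [\mathbf{j}_1 : \mathbf{j}_2]} \theta_{\mathbf{j}}\big)/\prod_{k=1}^d (j_{2,k} - j_{1,k} + 1)$, applied at every index $\mathbf{j}_0$. Then the resulting array $(\theta^{\star}_{\mathbf{j}})_{\mathbf{j}}$ is coordinate-wise nonincreasing with respect to the natural partial order: $\theta^{\star}_{\mathbf{j}} \ge \theta^{\star}_{\mathbf{j}'}$ whenever $\mathbf{j} \preceq \mathbf{j}'$ componentwise. -/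
noncomputable section

/-- Block average of the array `θ` over the block `[j₁ : j₂]`. -/
def blockAvg {d : ℕ} (θ : (Fin d → ℕ) → ℝ) (j₁ j₂ : Fin d → ℕ) : ℝ :=
  (∑ j ∈ Fintype.piFinset (fun k => Finset.Icc (j₁ k) (j₂ k)), θ j) /
    ∏ k, ((j₂ k : ℝ) - (j₁ k : ℝ) + 1)

/-- The min-max value `θ*_{j₀}` : minimum over lower corners `j₁ ⪯ j₀` of the maximum
over upper corners `j₂ ⪰ j₀` (within the grid `[1:J]`) of the block average. -/
def minMaxVal {d : ℕ} (J : Fin d → ℕ) (θ : (Fin d → ℕ) → ℝ) (j₀ : Fin d → ℕ) : ℝ :=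
  sInf ((fun j₁ => sSup (blockAvg θ j₁ '' {j₂ | ∀ k, j₀ k ≤ j₂ k ∧ j₂ k ≤ J k})) ''
    {j₁ | ∀ k, 1 ≤ j₁ k ∧ j₁ k ≤ j₀ k})

/-- the min-max array obtained from a nonnegative array is coordinate-wise
nonincreasing with respect to the natural partial order on indices. -/
theorem stmt13 {d : ℕ} (J : Fin d → ℕ) (hJ : ∀ k, 1 ≤ J k)
    (θ : (Fin d → ℕ) → ℝ) (hθ : ∀ j, 0 ≤ θ j)
    (j j' : Fin d → ℕ) (hj1 : ∀ k, 1 ≤ j k) (hj'J : ∀ k, j' k ≤ J k)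
    (hle : ∀ k, j k ≤ j' k) :
    minMaxVal J θ j' ≤ minMaxVal J θ j := by
  have hSfin : ∀ j₀ : Fin d → ℕ,
      ({j₂ | ∀ k, j₀ k ≤ j₂ k ∧ j₂ k ≤ J k} : Set (Fin d → ℕ)).Finite := by
    intro j₀
    apply (Set.finite_Icc j₀ J).subset
    intro x hx
    exact ⟨fun k => (hx k).1, fun k => (hx k).2⟩
  have hTfin : ∀ j₀ : Fin d → ℕ,
      ({j₁ | ∀ k, 1 ≤ j₁ k ∧ j₁ k ≤ j₀ k} : Set (Fin d → ℕ)).Finite := by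
    intro j₀
    apply (Set.finite_Icc (fun _ => 1) j₀).subset
    intro x hx
    exact ⟨fun k => (hx k).1, fun k => (hx k).2⟩
  unfold minMaxVal
  apply le_csInf
  · exact ⟨_, ⟨fun _ => 1, fun k => ⟨le_refl 1, hj1 k⟩, rfl⟩⟩
  · rintro b ⟨j₁, hj₁, rfl⟩
    have hj₁' : j₁ ∈ {j₁ | ∀ k, 1 ≤ j₁ k ∧ j₁ k ≤ j' k} :=
      fun k => ⟨(hj₁ k).1, (hj₁ k).2.trans (hle k)⟩
    calc sInf _ ≤ sSup (blockAvg θ j₁ '' {j₂ | ∀ k, j' k ≤ j₂ k ∧ j₂ k ≤ J k}) :=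
        csInf_le (((hTfin j').image _).bddBelow) ⟨j₁, hj₁', rfl⟩
      _ ≤ sSup (blockAvg θ j₁ '' {j₂ | ∀ k, j k ≤ j₂ k ∧ j₂ k ≤ J k}) := by
        apply csSup_le_csSup (((hSfin j).image _).bddAbove)
        · exact ⟨_, j', fun k => ⟨le_refl _, hj'J k⟩, rfl⟩
        · exact Set.image_mono (fun x hx k => ⟨(hle k).trans (hx k).1, (hx k).2⟩)
end
end
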